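/- The mean squared error of the Rand-k mean estimator equals E[||x̂ − x̄||²] = (1/n²)·(d/k − 1)·R1, where R1 = Σ_{i=1}^n ||x_i||² and the expectation is over the random choice of the subsets S_1,…,S_n. -/

import Mathlib

open Finset

noncomputable section

/-- A size-`k` subset of the coordinate set `{1,…,d}`. -/
abbrev KSub (d k : ℕ) := {S : Finset (Fin d) // S.card = k}

/-- Sample space: each of the `n` nodes independently picks a uniformly random
size-`k` subset of coordinates. -/
abbrev Omega (n d k : ℕ) := Fin n → KSub d k

/-- Expectation with respect to the uniform distribution on `Omega n d k`
(each `n`-tuple of `k`-subsets has probability `1 / C(d,k)^n`). -/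
def Exp {n d k : ℕ} (f : Omega n d k → ℝ) : ℝ :=
  (∑ ω : Omega n d k, f ω) / (Fintype.card (Omega n d k) : ℝ)

/-- The sparsified vector of node `i`: `h_{ij} = x_{ij}` if `j ∈ S_i`, else `0`. -/
def spars {n d k : ℕ} (x : Fin n → Fin d → ℝ) (ω : Omega n d k) (i : Fin n) (j : Fin d) : ℝ :=
  if j ∈ (ω i).1 then x i j else 0

/-- Rand-k estimation error:
`E[‖x̂ − x̄‖²] = (1/n²) (d/k − 1) R₁`, where `x̂ = (1/n)(d/k) Σᵢ hᵢ`,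
`x̄ = (1/n) Σᵢ xᵢ` and `R₁ = Σᵢ ‖xᵢ‖²`. -/
lemma aux1 {α K : Type*} [Fintype α] [DecidableEq α] [Fintype K] (i : α) (g : K → ℝ) :
    ∑ ω : α → K, g (ω i) = (Fintype.card K : ℝ) ^ (Fintype.card α - 1) * ∑ s, g s := by
  rw [← Equiv.sum_comp (Equiv.funSplitAt i K).symm (fun ω => g (ω i))]
  simp [Fintype.sum_prod_type, mul_comm]
  rw [Finset.sum_mul]

lemma aux2 {α K : Type*} [Fintype α] [DecidableEq α] [Fintype K]
    {i i' : α} (hne : i ≠ i') (g h : K → ℝ) (hh : ∑ s, h s = 0) :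
    ∑ ω : α → K, g (ω i) * h (ω i') = 0 := by
  rw [← Equiv.sum_comp (Equiv.funSplitAt i' K).symm (fun ω => g (ω i) * h (ω i'))]
  simp only [Fintype.sum_prod_type]
  have key : ∀ (s : K) (t : {j : α // j ≠ i'} → K),
      g (((Equiv.funSplitAt i' K).symm (s, t)) i) * h (((Equiv.funSplitAt i' K).symm (s, t)) i')
        = g (t ⟨i, hne⟩) * h s := by
    intro s t; simp [hne]
  simp_rw [key]
  rw [Finset.sum_comm]
  simp [← Finset.mul_sum, hh]

lemma aux_count (d k : ℕ) (hk : 1 ≤ k) (j : Fin d) :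
    ∑ S : KSub d k, (if j ∈ S.1 then (1:ℝ) else 0) = ((d-1).choose (k-1) : ℝ) := by
  rw [← Finset.sum_subtype ((univ : Finset (Fin d)).powersetCard k)
      (fun S => Finset.mem_powersetCard_univ) (fun S => if j ∈ S then (1:ℝ) else 0)]
  rw [Finset.sum_boole]
  norm_num
  have : ((univ : Finset (Fin d)).powersetCard k |>.filter (fun S => j ∈ S)).card
      = ((univ.erase j).powersetCard (k-1)).card := by
    apply Finset.card_bij' (fun S _ => S.erase j) (fun T _ => insert j T)
    · intro S hS
      simp only [Finset.mem_filter, Finset.mem_powersetCard_univ] at hS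
      exact Finset.insert_erase hS.2
    · intro T hT
      rw [Finset.mem_powersetCard] at hT
      have hjT : j ∉ T := fun h => (Finset.mem_erase.1 (hT.1 h)).1 rfl
      exact Finset.erase_insert hjT
    · intro S hS
      simp only [Finset.mem_filter, Finset.mem_powersetCard_univ] at hS
      rw [Finset.mem_powersetCard]
      refine ⟨Finset.erase_subset_erase j (Finset.subset_univ S), ?_⟩
      rw [Finset.card_erase_of_mem hS.2, hS.1]
    · intro T hT
      rw [Finset.mem_powersetCard] at hT
      have hjT : j ∉ T := fun h => (Finset.mem_erase.1 (hT.1 h)).1 rfl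
      simp only [Finset.mem_filter, Finset.mem_powersetCard_univ]
      constructor
      · rw [Finset.card_insert_of_notMem hjT, hT.2]; omega
      · exact Finset.mem_insert_self j T
  rw [this, Finset.card_powersetCard, Finset.card_erase_of_mem (Finset.mem_univ j)]
  simp

lemma aux_id (d k : ℕ) (hk : 1 ≤ k) (hkd : k ≤ d) :
    (d : ℝ) * ((d-1).choose (k-1) : ℕ) = (d.choose k : ℕ) * k := by
  have h := Nat.add_one_mul_choose_eq (d-1) (k-1)
  have h2 : d - 1 + 1 = d := by omega
  have h3 : k - 1 + 1 = k := by omega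
  rw [h2, h3] at h
  exact_mod_cast congrArg (Nat.cast : ℕ → ℝ) h

theorem randk_mse (n d k : ℕ) (hn : 1 ≤ n) (hk : 1 ≤ k) (hkd : k ≤ d)
    (x : Fin n → Fin d → ℝ) :
    Exp (fun ω : Omega n d k =>
        ∑ j : Fin d,
          ((1 / (n : ℝ)) * ((d : ℝ) / (k : ℝ)) * ∑ i : Fin n, spars x ω i j
            - (1 / (n : ℝ)) * ∑ i : Fin n, x i j) ^ 2)
      = (1 / (n : ℝ) ^ 2) * ((d : ℝ) / (k : ℝ) - 1)
          * ∑ i : Fin n, ∑ j : Fin d, x i j ^ 2 := by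
  have hd : 1 ≤ d := le_trans hk hkd
  have hk0 : (k : ℝ) ≠ 0 := Nat.cast_ne_zero.mpr (by omega)
  have hd0 : (d : ℝ) ≠ 0 := Nat.cast_ne_zero.mpr (by omega)
  have hn0 : (n : ℝ) ≠ 0 := Nat.cast_ne_zero.mpr (by omega)
  set c : ℝ := ((d.choose k : ℕ) : ℝ) with hc_def
  have hc0 : c ≠ 0 := Nat.cast_ne_zero.mpr (Nat.choose_pos hkd).ne'
  set m : ℝ := (((d-1).choose (k-1) : ℕ) : ℝ) with hm_def
  have hid : (d:ℝ) * m = c * k := aux_id d k hk hkd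
  have hm : m = c * k / d := by field_simp; linarith [hid]
  set g : Fin n → Fin d → KSub d k → ℝ :=
    fun i j S => (d:ℝ)/k * (if j ∈ S.1 then x i j else 0) - x i j with hg_def
  have hcardK : ((Fintype.card (KSub d k) : ℕ) : ℝ) = c := by
    rw [Fintype.card_finset_len, Fintype.card_fin]
  have sumg : ∀ i j, ∑ S : KSub d k, g i j S = 0 := by
    intro i j
    have e : ∀ S : KSub d k, g i j S
        = (d:ℝ)/k * x i j * (if j ∈ S.1 then (1:ℝ) else 0) - x i j := by
      intro S; by_cases h : j ∈ S.1 <;> simp [hg_def, h]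
    simp_rw [e]
    rw [Finset.sum_sub_distrib, ← Finset.mul_sum, aux_count d k hk j, Finset.sum_const,
      Finset.card_univ, nsmul_eq_mul, hcardK, ← hm_def]
    field_simp
    linear_combination x i j * hid
  have sumg2 : ∀ i j, ∑ S : KSub d k, g i j S * g i j S
      = c * ((d:ℝ)/k - 1) * x i j ^ 2 := by
    intro i j
    have e : ∀ S : KSub d k, g i j S * g i j S
        = (((d:ℝ)/k)^2 - 2*((d:ℝ)/k)) * x i j ^ 2 * (if j ∈ S.1 then (1:ℝ) else 0)
          + x i j ^ 2 := by
      intro S; by_cases h : j ∈ S.1 <;> simp [hg_def, h] <;> ring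
    simp_rw [e]
    rw [Finset.sum_add_distrib, ← Finset.mul_sum, aux_count d k hk j, Finset.sum_const,
      Finset.card_univ, nsmul_eq_mul, hcardK, ← hm_def, hm]
    field_simp
    ring
  have hcardO : ((Fintype.card (Omega n d k) : ℕ) : ℝ) = c ^ n := by
    rw [show Fintype.card (Omega n d k) = Fintype.card (KSub d k) ^ n by
        rw [Fintype.card_fun, Fintype.card_fin],
      Nat.cast_pow, hcardK]
  have inner : ∀ (j : Fin d) (i i' : Fin n),
      ∑ ω : Omega n d k, g i j (ω i) * g i' j (ω i')
        = if i = i' then c ^ (n-1) * (c * ((d:ℝ)/k - 1) * x i j ^ 2) else 0 := by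
    intro j i i'
    by_cases h : i = i'
    · subst h
      rw [if_pos rfl]
      have h1 := aux1 (α := Fin n) i (fun S => g i j S * g i j S)
      simp only [Fintype.card_fin] at h1
      rw [h1, sumg2, hcardK]
    · rw [if_neg h]
      exact aux2 h (g i j) (g i' j) (sumg i' j)
  have step1 : ∀ (ω : Omega n d k) (j : Fin d),
      ((1 / (n : ℝ)) * ((d : ℝ) / (k : ℝ)) * ∑ i : Fin n, spars x ω i j
            - (1 / (n : ℝ)) * ∑ i : Fin n, x i j) ^ 2
        = (1/(n:ℝ))^2 * ∑ i : Fin n, ∑ i' : Fin n, g i j (ω i) * g i' j (ω i') := by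
    intro ω j
    have e1 : (1 / (n : ℝ)) * ((d : ℝ) / (k : ℝ)) * ∑ i : Fin n, spars x ω i j
            - (1 / (n : ℝ)) * ∑ i : Fin n, x i j
        = (1/(n:ℝ)) * ∑ i : Fin n, g i j (ω i) := by
      simp only [hg_def, spars]
      rw [Finset.sum_sub_distrib, ← Finset.mul_sum]
      ring
    rw [e1, mul_pow]
    congr 1
    rw [pow_two, Finset.sum_mul_sum]
  unfold Exp
  simp_rw [step1]
  rw [hcardO]
  have key : ∑ ω : Omega n d k, ∑ j : Fin d,
        (1/(n:ℝ))^2 * ∑ i : Fin n, ∑ i' : Fin n, g i j (ω i) * g i' j (ω i')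
      = (1/(n:ℝ))^2 * ∑ j : Fin d, ∑ i : Fin n, ∑ i' : Fin n,
          ∑ ω : Omega n d k, g i j (ω i) * g i' j (ω i') := by
    rw [Finset.sum_comm, Finset.mul_sum]
    refine Finset.sum_congr rfl fun j _ => ?_
    rw [← Finset.mul_sum]
    congr 1
    rw [Finset.sum_comm]
    refine Finset.sum_congr rfl fun i _ => ?_
    exact Finset.sum_comm
  rw [key]
  simp_rw [inner, Finset.sum_ite_eq, Finset.mem_univ, if_pos]
  have hpow : c ^ (n-1) * c = c ^ n := by
    rw [← pow_succ]; congr 1; omega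
  have e2 : ∀ (j : Fin d) (i : Fin n),
      c ^ (n-1) * (c * ((d:ℝ)/k - 1) * x i j ^ 2)
        = (c ^ n * ((d:ℝ)/k - 1)) * x i j ^ 2 := by
    intro j i; rw [← hpow]; ring
  simp_rw [e2, ← Finset.mul_sum]
  rw [Finset.sum_comm]
  have hcn : c ^ n ≠ 0 := pow_ne_zero _ hc0
  field_simp
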